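/- (Bracket identity from (2.9).) In the polarized setting with F holomorphic on Ω ⊆ ℂ⁴ and F_{z₁ζ₁} vanishing nowhere on Ω, the vector fields on Ω × ℂ satisfy [𝒦, ℒ̄₁] = −(∂_{ζ₁}k)·ℒ₁, where 𝒦 := k ℒ₁ + ℒ₂ and k := −F_{z₂ζ₁}/F_{z₁ζ₁}. -/

import Mathlib

open Complex

set_option maxHeartbeats 1000000

noncomputable section

/-- Partial derivative with respect to `z₁`, the first coordinate of `(z₁, z₂, ζ₁, ζ₂) ∈ ℂ⁴`. -/
def pz1 (G : ℂ × ℂ × ℂ × ℂ → ℂ) (q : ℂ × ℂ × ℂ × ℂ) : ℂ :=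
  deriv (fun s => G (s, q.2.1, q.2.2.1, q.2.2.2)) q.1

/-- Partial derivative with respect to `z₂`. -/
def pz2 (G : ℂ × ℂ × ℂ × ℂ → ℂ) (q : ℂ × ℂ × ℂ × ℂ) : ℂ :=
  deriv (fun s => G (q.1, s, q.2.2.1, q.2.2.2)) q.2.1

/-- Partial derivative with respect to `ζ₁`. -/
def pc1 (G : ℂ × ℂ × ℂ × ℂ → ℂ) (q : ℂ × ℂ × ℂ × ℂ) : ℂ :=
  deriv (fun s => G (q.1, q.2.1, s, q.2.2.2)) q.2.2.1

lemma pz1_eq_fderiv {G : ℂ × ℂ × ℂ × ℂ → ℂ} {q : ℂ × ℂ × ℂ × ℂ}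
    (hG : DifferentiableAt ℂ G q) :
    pz1 G q = fderiv ℂ G q (1, 0, 0, 0) := by
  have hφ : HasDerivAt (fun s : ℂ => (s, q.2.1, q.2.2.1, q.2.2.2))
      ((1 : ℂ), (0 : ℂ), (0 : ℂ), (0 : ℂ)) q.1 :=
    (hasDerivAt_id q.1).prodMk ((hasDerivAt_const q.1 q.2.1).prodMk
      ((hasDerivAt_const q.1 q.2.2.1).prodMk (hasDerivAt_const q.1 q.2.2.2)))
  exact (hG.hasFDerivAt.comp_hasDerivAt q.1 hφ).deriv

lemma pz2_eq_fderiv {G : ℂ × ℂ × ℂ × ℂ → ℂ} {q : ℂ × ℂ × ℂ × ℂ}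
    (hG : DifferentiableAt ℂ G q) :
    pz2 G q = fderiv ℂ G q (0, 1, 0, 0) := by
  have hφ : HasDerivAt (fun s : ℂ => (q.1, s, q.2.2.1, q.2.2.2))
      ((0 : ℂ), (1 : ℂ), (0 : ℂ), (0 : ℂ)) q.2.1 :=
    (hasDerivAt_const q.2.1 q.1).prodMk ((hasDerivAt_id q.2.1).prodMk
      ((hasDerivAt_const q.2.1 q.2.2.1).prodMk (hasDerivAt_const q.2.1 q.2.2.2)))
  exact (hG.hasFDerivAt.comp_hasDerivAt q.2.1 hφ).deriv

lemma pc1_eq_fderiv {G : ℂ × ℂ × ℂ × ℂ → ℂ} {q : ℂ × ℂ × ℂ × ℂ}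
    (hG : DifferentiableAt ℂ G q) :
    pc1 G q = fderiv ℂ G q (0, 0, 1, 0) := by
  have hφ : HasDerivAt (fun s : ℂ => (q.1, q.2.1, s, q.2.2.2))
      ((0 : ℂ), (0 : ℂ), (1 : ℂ), (0 : ℂ)) q.2.2.1 :=
    (hasDerivAt_const q.2.2.1 q.1).prodMk ((hasDerivAt_const q.2.2.1 q.2.1).prodMk
      ((hasDerivAt_id q.2.2.1).prodMk (hasDerivAt_const q.2.2.1 q.2.2.2)))
  exact (hG.hasFDerivAt.comp_hasDerivAt q.2.2.1 hφ).deriv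

lemma pc1_congr {G H : ℂ × ℂ × ℂ × ℂ → ℂ} {q : ℂ × ℂ × ℂ × ℂ}
    (h : G =ᶠ[nhds q] H) : pc1 G q = pc1 H q := by
  apply Filter.EventuallyEq.deriv_eq
  have hc : ContinuousAt (fun s : ℂ => (q.1, q.2.1, s, q.2.2.2)) q.2.2.1 := by fun_prop
  exact h.comp_tendsto hc


/-- Bracket identity `[𝒦, ℒ̄₁] = −(∂_{ζ₁}k)·ℒ₁` from (2.9), in the polarized setting on
`Ω × ℂ ⊆ ℂ⁴ × ℂ` (last coordinate `v`), with `ℒ₁ = ∂_{z₁} − iF_{z₁}∂_v`,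
`ℒ₂ = ∂_{z₂} − iF_{z₂}∂_v`, `ℒ̄₁ = ∂_{ζ₁} + iF_{ζ₁}∂_v`, `𝒦 = kℒ₁ + ℒ₂`,
`k = −F_{z₂ζ₁}/F_{z₁ζ₁}`. -/
theorem bracket_K_L1bar (Ω : Set (ℂ × ℂ × ℂ × ℂ)) (hΩ : IsOpen Ω)
    (F : ℂ × ℂ × ℂ × ℂ → ℂ) (hF : AnalyticOnNhd ℂ F Ω)
    (hne : ∀ q ∈ Ω, pc1 (pz1 F) q ≠ 0)
    (k : ℂ × ℂ × ℂ × ℂ → ℂ) (hk : k = fun q => -(pc1 (pz2 F) q) / pc1 (pz1 F) q)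
    (L1 L2 L1bar K : (ℂ × ℂ × ℂ × ℂ) × ℂ → (ℂ × ℂ × ℂ × ℂ) × ℂ)
    (hL1 : L1 = fun p => (((1 : ℂ), (0 : ℂ), (0 : ℂ), (0 : ℂ)), -I * pz1 F p.1))
    (hL2 : L2 = fun p => (((0 : ℂ), (1 : ℂ), (0 : ℂ), (0 : ℂ)), -I * pz2 F p.1))
    (hL1bar : L1bar = fun p => (((0 : ℂ), (0 : ℂ), (1 : ℂ), (0 : ℂ)), I * pc1 F p.1))
    (hK : K = fun p => k p.1 • L1 p + L2 p) :
    ∀ p : (ℂ × ℂ × ℂ × ℂ) × ℂ, p.1 ∈ Ω →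
      VectorField.lieBracket ℂ K L1bar p = -(pc1 k p.1) • L1 p := by
  intro p hp
  have hf'a : AnalyticOnNhd ℂ (fderiv ℂ F) Ω := hF.fderiv
  have hSa : AnalyticOnNhd ℂ (fderiv ℂ (fderiv ℂ F)) Ω := hf'a.fderiv
  set S := fderiv ℂ (fderiv ℂ F) with hS
  have hFd : ∀ r ∈ Ω, DifferentiableAt ℂ F r := fun r hr => (hF r hr).differentiableAt
  have hf'd : ∀ r ∈ Ω, DifferentiableAt ℂ (fderiv ℂ F) r :=
    fun r hr => (hf'a r hr).differentiableAt
  have hfvd : ∀ (v : ℂ × ℂ × ℂ × ℂ), ∀ r ∈ Ω,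
      DifferentiableAt ℂ (fun y => fderiv ℂ F y v) r :=
    fun v r hr => (hf'd r hr).clm_apply (differentiableAt_const v)
  have hfv : ∀ (v w : ℂ × ℂ × ℂ × ℂ), ∀ r ∈ Ω,
      fderiv ℂ (fun y => fderiv ℂ F y v) r w = S r w v := by
    intro v w r hr
    rw [fderiv_clm_apply (hf'd r hr) (differentiableAt_const v)]
    simp [hS]
  have hpz1 : ∀ r ∈ Ω, pz1 F r = fderiv ℂ F r (1, 0, 0, 0) :=
    fun r hr => pz1_eq_fderiv (hFd r hr)
  have hpz2 : ∀ r ∈ Ω, pz2 F r = fderiv ℂ F r (0, 1, 0, 0) :=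
    fun r hr => pz2_eq_fderiv (hFd r hr)
  have hpc1F : ∀ r ∈ Ω, pc1 F r = fderiv ℂ F r (0, 0, 1, 0) :=
    fun r hr => pc1_eq_fderiv (hFd r hr)
  have hA : ∀ r ∈ Ω, pc1 (pz1 F) r = S r (0, 0, 1, 0) (1, 0, 0, 0) := by
    intro r hr
    have h1 : pz1 F =ᶠ[nhds r] fun y => fderiv ℂ F y (1, 0, 0, 0) := by
      filter_upwards [hΩ.mem_nhds hr] with y hy using hpz1 y hy
    rw [pc1_congr h1, pc1_eq_fderiv (hfvd _ r hr), hfv _ _ r hr]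
  have hB : ∀ r ∈ Ω, pc1 (pz2 F) r = S r (0, 0, 1, 0) (0, 1, 0, 0) := by
    intro r hr
    have h1 : pz2 F =ᶠ[nhds r] fun y => fderiv ℂ F y (0, 1, 0, 0) := by
      filter_upwards [hΩ.mem_nhds hr] with y hy using hpz2 y hy
    rw [pc1_congr h1, pc1_eq_fderiv (hfvd _ r hr), hfv _ _ r hr]
  -- k is differentiable at p.1
  have hkev : k =ᶠ[nhds p.1]
      fun r => -(S r (0, 0, 1, 0) (0, 1, 0, 0)) / S r (0, 0, 1, 0) (1, 0, 0, 0) := by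
    filter_upwards [hΩ.mem_nhds hp] with r hr
    rw [hk]; simp only []; rw [hA r hr, hB r hr]
  have hSan : AnalyticAt ℂ S p.1 := hSa p.1 hp
  have happ : ∀ v w : ℂ × ℂ × ℂ × ℂ, AnalyticAt ℂ (fun r => S r v w) p.1 := by
    intro v w
    have h := (((ContinuousLinearMap.apply ℂ ℂ w).comp
        (ContinuousLinearMap.apply ℂ ((ℂ × ℂ × ℂ × ℂ) →L[ℂ] ℂ) v)).analyticAt (S p.1)).comp hSan
    exact h
  have hg1ne : S p.1 (0, 0, 1, 0) (1, 0, 0, 0) ≠ 0 := by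
    rw [← hA p.1 hp]; exact hne p.1 hp
  have hkan : AnalyticAt ℂ
      (fun r => -(S r (0, 0, 1, 0) (0, 1, 0, 0)) / S r (0, 0, 1, 0) (1, 0, 0, 0)) p.1 :=
    ((happ _ _).neg).div (happ _ _) hg1ne
  have hkd : DifferentiableAt ℂ k p.1 :=
    hkan.differentiableAt.congr_of_eventuallyEq hkev
  have hpc1k : pc1 k p.1 = fderiv ℂ k p.1 (0, 0, 1, 0) := pc1_eq_fderiv hkd
  -- key algebraic relation from the definition of k
  have hkval : k p.1 = -(S p.1 (0, 0, 1, 0) (0, 1, 0, 0)) / S p.1 (0, 0, 1, 0) (1, 0, 0, 0) := by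
    rw [hk]; simp only []; rw [hA p.1 hp, hB p.1 hp]
  have hrel : k p.1 * S p.1 (0, 0, 1, 0) (1, 0, 0, 0) + S p.1 (0, 0, 1, 0) (0, 1, 0, 0) = 0 := by
    rw [hkval, div_mul_cancel₀ _ hg1ne]; ring
  -- symmetry of the second derivative
  have hsymm : ∀ v w, S p.1 v w = S p.1 w v := by
    intro v w
    exact (((hF p.1 hp).contDiffAt (n := 2)).isSymmSndFDerivAt (by simp)).eq v w
  -- derivative of L1bar
  have hmemp : (Prod.fst ⁻¹' Ω : Set ((ℂ × ℂ × ℂ × ℂ) × ℂ)) ∈ nhds p :=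
    (hΩ.preimage continuous_fst).mem_nhds hp
  have hfst : HasFDerivAt (fun y : (ℂ × ℂ × ℂ × ℂ) × ℂ => y.1)
      (ContinuousLinearMap.fst ℂ (ℂ × ℂ × ℂ × ℂ) ℂ) p := hasFDerivAt_fst
  have hL1barEv : L1bar =ᶠ[nhds p] fun y =>
      (((0 : ℂ), (0 : ℂ), (1 : ℂ), (0 : ℂ)), I * fderiv ℂ F y.1 (0, 0, 1, 0)) := by
    filter_upwards [hmemp] with y hy
    rw [hL1bar]; simp only []; rw [hpc1F y.1 hy]
  have hL1barD0 : HasFDerivAt (fun y : (ℂ × ℂ × ℂ × ℂ) × ℂ =>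
      (((0 : ℂ), (0 : ℂ), (1 : ℂ), (0 : ℂ)), I * fderiv ℂ F y.1 (0, 0, 1, 0)))
      ((0 : ((ℂ × ℂ × ℂ × ℂ) × ℂ) →L[ℂ] (ℂ × ℂ × ℂ × ℂ)).prod
        (I • ((fderiv ℂ (fun y => fderiv ℂ F y (0, 0, 1, 0)) p.1).comp
          (ContinuousLinearMap.fst ℂ (ℂ × ℂ × ℂ × ℂ) ℂ)))) p :=
    (hasFDerivAt_const _ p).prodMk
      ((((hfvd (0, 0, 1, 0) p.1 hp).hasFDerivAt.comp p hfst)).const_mul I)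
  have hL1barD : HasFDerivAt L1bar _ p := hL1barD0.congr_of_eventuallyEq hL1barEv
  -- derivative of K
  have hKEv : K =ᶠ[nhds p] fun y =>
      ((k y.1, (1 : ℂ), (0 : ℂ), (0 : ℂ)),
        k y.1 * (-I * fderiv ℂ F y.1 (1, 0, 0, 0)) + -I * fderiv ℂ F y.1 (0, 1, 0, 0)) := by
    filter_upwards [hmemp] with y hy
    rw [hK, hL1, hL2]; simp only []
    rw [hpz1 y.1 hy, hpz2 y.1 hy]
    simp [Prod.ext_iff]
  have t1 : HasFDerivAt (fun y : (ℂ × ℂ × ℂ × ℂ) × ℂ => k y.1)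
      ((fderiv ℂ k p.1).comp (ContinuousLinearMap.fst ℂ (ℂ × ℂ × ℂ × ℂ) ℂ)) p :=
    hkd.hasFDerivAt.comp p hfst
  have t2 : HasFDerivAt (fun y : (ℂ × ℂ × ℂ × ℂ) × ℂ => fderiv ℂ F y.1 (1, 0, 0, 0))
      ((fderiv ℂ (fun y => fderiv ℂ F y (1, 0, 0, 0)) p.1).comp
        (ContinuousLinearMap.fst ℂ (ℂ × ℂ × ℂ × ℂ) ℂ)) p :=
    (hfvd (1, 0, 0, 0) p.1 hp).hasFDerivAt.comp p hfst
  have t3 : HasFDerivAt (fun y : (ℂ × ℂ × ℂ × ℂ) × ℂ => fderiv ℂ F y.1 (0, 1, 0, 0))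
      ((fderiv ℂ (fun y => fderiv ℂ F y (0, 1, 0, 0)) p.1).comp
        (ContinuousLinearMap.fst ℂ (ℂ × ℂ × ℂ × ℂ) ℂ)) p :=
    (hfvd (0, 1, 0, 0) p.1 hp).hasFDerivAt.comp p hfst
  have hKD1 := t1.prodMk ((hasFDerivAt_const (𝕜 := ℂ) (1 : ℂ) p).prodMk
      ((hasFDerivAt_const (𝕜 := ℂ) (0 : ℂ) p).prodMk (hasFDerivAt_const (𝕜 := ℂ) (0 : ℂ) p)))
  have hKD0 := hKD1.prodMk
    ((t1.mul (t2.const_mul (-I))).add (t3.const_mul (-I)))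
  have hKD : HasFDerivAt K _ p := hKD0.congr_of_eventuallyEq hKEv
  -- values of the fields at p
  have hKp : K p = ((k p.1, (1 : ℂ), (0 : ℂ), (0 : ℂ)),
      k p.1 * (-I * fderiv ℂ F p.1 (1, 0, 0, 0)) + -I * fderiv ℂ F p.1 (0, 1, 0, 0)) :=
    hKEv.eq_of_nhds
  have hL1barp : L1bar p = (((0 : ℂ), (0 : ℂ), (1 : ℂ), (0 : ℂ)),
      I * fderiv ℂ F p.1 (0, 0, 1, 0)) := hL1barEv.eq_of_nhds
  -- assemble
  show fderiv ℂ L1bar p (K p) - fderiv ℂ K p (L1bar p) = _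
  rw [hL1barD.fderiv, hKD.fderiv, hKp, hL1barp, hL1, hpc1k]
  simp only [ContinuousLinearMap.prod_apply, ContinuousLinearMap.comp_apply,
    ContinuousLinearMap.coe_fst', ContinuousLinearMap.smul_apply,
    ContinuousLinearMap.add_apply, ContinuousLinearMap.zero_apply, smul_eq_mul,
    ContinuousLinearMap.coe_smul', Pi.smul_apply]
  rw [hfv (0, 0, 1, 0) _ p.1 hp, hfv (1, 0, 0, 0) _ p.1 hp, hfv (0, 1, 0, 0) _ p.1 hp,
    hpz1 p.1 hp]
  have hdec : ((k p.1, (1 : ℂ), (0 : ℂ), (0 : ℂ)) : ℂ × ℂ × ℂ × ℂ)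
      = k p.1 • ((1 : ℂ), (0 : ℂ), (0 : ℂ), (0 : ℂ)) + ((0 : ℂ), (1 : ℂ), (0 : ℂ), (0 : ℂ)) := by
    simp [Prod.ext_iff]
  have hlin : S p.1 ((k p.1, (1 : ℂ), (0 : ℂ), (0 : ℂ))) (0, 0, 1, 0)
      = k p.1 * S p.1 (1, 0, 0, 0) (0, 0, 1, 0) + S p.1 (0, 1, 0, 0) (0, 0, 1, 0) := by
    rw [hdec]
    simp only [map_add, map_smul, ContinuousLinearMap.add_apply,
      ContinuousLinearMap.smul_apply, smul_eq_mul]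
  rw [hlin, hsymm (1, 0, 0, 0) (0, 0, 1, 0), hsymm (0, 1, 0, 0) (0, 0, 1, 0)]
  simp only [Prod.ext_iff, Prod.smul_mk, Prod.mk_sub_mk, Prod.neg_mk, zero_sub,
    smul_eq_mul, Prod.mk.injEq]
  refine ⟨⟨by simp, by simp, by simp, by simp⟩, ?_⟩
  linear_combination (2 * I) * hrel
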